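/- For a ∈ ℕ, the identity (1−z)^a · P^{λ−1, −2λ−2a+1}_a((3+z)/(1−z)) = (−1)^a · ((λ+[a/2])_{[(a+1)/2]}/(λ−1/2)_{[(a+1)/2]}) · C^{λ−1/2}_a(z) holds as an identity of rational functions in λ and polynomials in z. -/

import Mathlib

noncomputable section
open Finset

/-- Generalized binomial coefficient `C(μ, k) = μ(μ−1)⋯(μ−k+1)/k!`. -/
def gbinom (μ : ℂ) (k : ℕ) : ℂ := (∏ i ∈ Finset.range k, (μ - i)) / (k.factorial : ℂ)

/-- Pochhammer symbol `(z)_k = z(z+1)⋯(z+k−1)`. -/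
def poch (z : ℂ) (k : ℕ) : ℂ := ∏ i ∈ Finset.range k, (z + i)

/-- The Rankin–Cohen polynomial
`RC^{λ₁,λ₂}_a(x,y) = Σ_{ℓ=0}^{a} (−1)^ℓ C(λ₁+a−1, ℓ) C(λ₂+a−1, a−ℓ) x^{a−ℓ} y^ℓ`. -/
def RC (a : ℕ) (l1 l2 x y : ℂ) : ℂ :=
  ∑ ℓ ∈ Finset.range (a + 1),
    (-1 : ℂ) ^ ℓ * gbinom (l1 + a - 1) ℓ * gbinom (l2 + a - 1) (a - ℓ) * x ^ (a - ℓ) * y ^ ℓ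

/-- The Jacobi polynomial `P^{α,β}_ℓ(t)`, written via Pochhammer symbols:
`P^{α,β}_ℓ(t) = Σ_m (α+m+1)_{ℓ−m}/(ℓ−m)! · (α+β+ℓ+1)_m/m! · ((t−1)/2)^m`. -/
def jacobiP (α β : ℂ) (ℓ : ℕ) (t : ℂ) : ℂ :=
  ∑ m ∈ Finset.range (ℓ + 1),
    poch (α + m + 1) (ℓ - m) / ((ℓ - m).factorial : ℂ) *
      (poch (α + β + ℓ + 1) m / (m.factorial : ℂ)) * ((t - 1) / 2) ^ m

/-- The homogenized (two-variable) Jacobi polynomial `P^{α,β}_ℓ(x,y) = y^ℓ P^{α,β}_ℓ(2x/y+1)`. -/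
def jacobiP2 (α β : ℂ) (ℓ : ℕ) (x y : ℂ) : ℂ :=
  ∑ m ∈ Finset.range (ℓ + 1),
    poch (α + m + 1) (ℓ - m) / ((ℓ - m).factorial : ℂ) *
      (poch (α + β + ℓ + 1) m / (m.factorial : ℂ)) * x ^ m * y ^ (ℓ - m)

/-- The Gegenbauer polynomial
`C^α_ℓ(t) = Σ_{k=0}^{[ℓ/2]} (−1)^k (α)_{ℓ−k}/((ℓ−2k)! k!) (2t)^{ℓ−2k}`. -/
def gegen (α : ℂ) (ℓ : ℕ) (t : ℂ) : ℂ :=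
  ∑ k ∈ Finset.range (ℓ / 2 + 1),
    (-1 : ℂ) ^ k * poch α (ℓ - k) / (((ℓ - 2 * k).factorial : ℂ) * (k.factorial : ℂ)) *
      (2 * t) ^ (ℓ - 2 * k)

/-- The two-variable Gegenbauer polynomial `C^α_ℓ(s,t) = s^{ℓ/2} C^α_ℓ(t/√s)`. -/
def gegen2 (α : ℂ) (ℓ : ℕ) (s t : ℂ) : ℂ :=
  ∑ k ∈ Finset.range (ℓ / 2 + 1),
    (-1 : ℂ) ^ k * poch α (ℓ - k) / (((ℓ - 2 * k).factorial : ℂ) * (k.factorial : ℂ)) *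
      s ^ k * (2 * t) ^ (ℓ - 2 * k)

/-- Gegenbauer polynomial with integer index, with the convention `C^α_{−1} := 0`. -/
def gegenZ (α : ℂ) (n : ℤ) (t : ℂ) : ℂ := if n < 0 then 0 else gegen α n.toNat t

/-- Two-variable Gegenbauer polynomial with integer index, `C^α_{−1} := 0`. -/
def gegen2Z (α : ℂ) (n : ℤ) (s t : ℂ) : ℂ := if n < 0 then 0 else gegen2 α n.toNat s t

set_option maxHeartbeats 1600000

/-- Falling factorial `x(x−1)⋯(x−k+1)`. -/
def fall (x : ℂ) (k : ℕ) : ℂ := ∏ i ∈ Finset.range k, (x - i)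
lemma fall_zero (x : ℂ) : fall x 0 = 1 := by simp [fall]
lemma fall_succ (x : ℂ) (k : ℕ) : fall x (k + 1) = fall x k * (x - k) := by
  simp [fall, Finset.prod_range_succ]
lemma fall_succ_left (x : ℂ) (k : ℕ) : fall x (k + 1) = x * fall (x - 1) k := by
  rw [fall, Finset.prod_range_succ']
  simp only [Nat.cast_zero, sub_zero, mul_comm]
  congr 1
  apply Finset.prod_congr rfl; intro i _; push_cast; ring
lemma poch_eq_fall (x : ℂ) (k : ℕ) : poch x k = fall (x + k - 1) k := by
  induction k with
  | zero => simp [poch, fall]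
  | succ k ih =>
    rw [poch, Finset.prod_range_succ, ← poch, ih]
    push_cast
    have h1 : x + ((k : ℂ) + 1) - 1 = x + k := by ring
    rw [h1, fall_succ_left]
    have h2 : x + (k : ℂ) - 1 = x + k - 1 := by ring
    ring
lemma poch_add (x : ℂ) (p q : ℕ) : poch x (p + q) = poch x p * poch (x + p) q := by
  rw [poch, Finset.prod_range_add, ← poch]
  congr 1
  apply Finset.prod_congr rfl; intro i _; push_cast; ring
lemma fall_add (x : ℂ) (p q : ℕ) : fall x (p + q) = fall x p * fall (x - p) q := by
  rw [fall, Finset.prod_range_add, ← fall]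
  congr 1
  apply Finset.prod_congr rfl; intro i _; push_cast; ring
lemma poch_neg (x : ℂ) (k : ℕ) : poch (-x) k = (-1) ^ k * fall x k := by
  rw [poch, fall]
  calc ∏ i ∈ range k, (-x + (i:ℂ)) = ∏ i ∈ range k, ((-1) * (x - i)) :=
        Finset.prod_congr rfl (by intros; ring)
    _ = (∏ _i ∈ range k, (-1 : ℂ)) * ∏ i ∈ range k, (x - (i:ℂ)) := Finset.prod_mul_distrib
    _ = (-1) ^ k * ∏ i ∈ range k, (x - (i:ℂ)) := by rw [Finset.prod_const, Finset.card_range]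
lemma fall_cast (n k : ℕ) : fall (n : ℂ) k = (n.descFactorial k : ℂ) := by
  induction k with
  | zero => simp [fall]
  | succ k ih =>
    rw [fall_succ, ih, Nat.descFactorial_succ]
    rcases le_or_gt (k+1) n with h | h
    · push_cast [Nat.cast_sub (by omega : k ≤ n)]; ring
    · have h0 : n - k = 0 := by omega
      rw [h0, Nat.zero_mul, Nat.cast_zero]
      rcases Nat.lt_or_ge n k with h3 | h3
      · rw [Nat.descFactorial_eq_zero_iff_lt.2 h3]; simp
      · have hnk : n = k := by omega
        subst hnk; simp
lemma fall_nat_zero_of_lt {n k : ℕ} (h : n < k) : fall (n : ℂ) k = 0 := by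
  rw [fall_cast, Nat.descFactorial_eq_zero_iff_lt.2 h, Nat.cast_zero]
lemma fall_vandermonde (n : ℕ) (x y : ℂ) :
    fall (x + y) n = ∑ j ∈ range (n + 1), (n.choose j : ℂ) * fall x j * fall y (n - j) := by
  induction n with
  | zero => simp [fall]
  | succ n ih =>
    rw [fall_succ, ih, Finset.sum_mul]
    have key : ∀ j ∈ range (n + 1),
        (n.choose j : ℂ) * fall x j * fall y (n - j) * (x + y - n)
          = (n.choose j : ℂ) * (fall x (j+1) * fall y (n - j))
            + (n.choose j : ℂ) * (fall x j * fall y (n + 1 - j)) := by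
      intro j hj
      have hjn : j ≤ n := by simpa [Nat.lt_succ_iff] using hj
      have h1 : ((n - j : ℕ) : ℂ) = (n : ℂ) - j := by
        push_cast [Nat.cast_sub hjn]; ring
      have h2 : n + 1 - j = (n - j) + 1 := by omega
      rw [h2, fall_succ, fall_succ, h1]
      ring
    rw [Finset.sum_congr rfl key, Finset.sum_add_distrib]
    have hT : ∑ j ∈ range (n + 1 + 1), ((n+1).choose j : ℂ) * fall x j * fall y (n + 1 - j)
        = (∑ j ∈ range (n+1), (n.choose j : ℂ) * (fall x (j+1) * fall y (n - j)))
          + ((∑ j ∈ range (n+1), (n.choose (j+1) : ℂ) * (fall x (j+1) * fall y (n - j)))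
          + fall y (n+1)) := by
      rw [Finset.sum_range_succ']
      simp only [Nat.succ_sub_succ, Nat.choose_zero_right, Nat.cast_one, one_mul,
        Nat.sub_zero, fall_zero]
      have hh : ∀ j ∈ range (n+1), ((n+1).choose (j+1) : ℂ) * fall x (j+1) * fall y (n - j)
          = (n.choose j : ℂ) * (fall x (j+1) * fall y (n - j))
            + (n.choose (j+1) : ℂ) * (fall x (j+1) * fall y (n - j)) := by
        intro j hj
        rw [Nat.choose_succ_succ]
        push_cast; ring
      rw [Finset.sum_congr rfl hh, Finset.sum_add_distrib]
      ring
    have h1 := Finset.sum_range_succ' (fun j => (n.choose j : ℂ) * (fall x j * fall y (n + 1 - j))) (n+1)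
    have h2 := Finset.sum_range_succ (fun j => (n.choose j : ℂ) * (fall x j * fall y (n + 1 - j))) (n+1)
    simp only [Nat.succ_sub_succ, Nat.choose_succ_self, Nat.cast_zero, zero_mul, add_zero,
      Nat.sub_zero, Nat.choose_zero_right, Nat.cast_one, one_mul, fall_zero] at h1 h2
    rw [hT]
    linear_combination h1 - h2
lemma key_scalar (k p q : ℕ) :
    (1 / ((k+p+q).factorial : ℂ)) * ((k+p+q).choose k : ℂ) * ((p+q).choose p : ℂ)
      = (1 / (((k+q).factorial : ℂ) * ((k+p).factorial : ℂ)))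
        * ((k+p).choose k : ℂ) * (((k+q).descFactorial k : ℕ) : ℂ) := by
  rw [Nat.descFactorial_eq_factorial_mul_choose]
  push_cast
  rw [Nat.cast_choose ℂ (by omega : k ≤ k+p+q), Nat.cast_choose ℂ (by omega : p ≤ p+q),
    Nat.cast_choose ℂ (by omega : k ≤ k+p), Nat.cast_choose ℂ (by omega : k ≤ k+q)]
  have e1 : k+p+q-k = p+q := by omega
  have e2 : p+q-p = q := by omega
  have e3 : k+p-k = p := by omega
  have e4 : k+q-k = q := by omega
  rw [e1, e2, e3, e4]
  have f1 : ((k+p+q).factorial : ℂ) ≠ 0 := Nat.cast_ne_zero.2 (Nat.factorial_ne_zero _)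
  have f2 : ((p+q).factorial : ℂ) ≠ 0 := Nat.cast_ne_zero.2 (Nat.factorial_ne_zero _)
  have f3 : ((k+p).factorial : ℂ) ≠ 0 := Nat.cast_ne_zero.2 (Nat.factorial_ne_zero _)
  have f4 : ((k+q).factorial : ℂ) ≠ 0 := Nat.cast_ne_zero.2 (Nat.factorial_ne_zero _)
  have f5 : ((k).factorial : ℂ) ≠ 0 := Nat.cast_ne_zero.2 (Nat.factorial_ne_zero _)
  have f6 : ((p).factorial : ℂ) ≠ 0 := Nat.cast_ne_zero.2 (Nat.factorial_ne_zero _)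
  have f7 : ((q).factorial : ℂ) ≠ 0 := Nat.cast_ne_zero.2 (Nat.factorial_ne_zero _)
  field_simp
lemma key_perk (k p q : ℕ) (c : ℂ) :
    fall c (k+p+q) / ((k+p+q).factorial : ℂ) * ((k+p+q).choose k : ℂ) * ((p+q).choose p : ℂ)
      = fall c (k+q) / (((k+q).factorial : ℂ) * ((k+p).factorial : ℂ))
        * ((k+p).choose k : ℂ) * (((k+q).descFactorial k : ℕ) : ℂ) * fall (c - (k+q)) p := by
  have hsplit : fall c (k+p+q) = fall c (k+q) * fall (c - (k+q)) p := by
    have h : k+p+q = (k+q) + p := by omega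
    rw [h, fall_add]
    norm_cast
  rw [hsplit]
  have := key_scalar k p q
  linear_combination (fall c (k+q) * fall (c - (k+q)) p) * this
lemma key_m (a m : ℕ) (hm : m ≤ a) (c : ℂ) :
    (∑ k ∈ range (min m (a-m) + 1),
      fall c (a-k) / ((a-k).factorial : ℂ) * ((a-k).choose k : ℂ) * ((a-2*k).choose (m-k) : ℂ))
    = fall c m / (m.factorial : ℂ) * (fall c (a-m) / ((a-m).factorial : ℂ)) := by
  have step1 : ∀ k ∈ range (min m (a-m) + 1),
      fall c (a-k) / ((a-k).factorial : ℂ) * ((a-k).choose k : ℂ) * ((a-2*k).choose (m-k) : ℂ)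
      = fall c (a-m) / (((a-m).factorial : ℂ) * (m.factorial : ℂ))
        * ((m.choose k : ℂ) * fall (((a-m) : ℕ) : ℂ) k * fall (c - (((a-m) : ℕ) : ℂ)) (m-k)) := by
    intro k hk
    have hk' : k ≤ min m (a-m) := by simpa [Nat.lt_succ_iff] using hk
    have h1 : a - k = k + (m-k) + (a-m-k) := by omega
    have h2 : a - 2*k = (m-k) + (a-m-k) := by omega
    rw [h1, h2, key_perk k (m-k) (a-m-k) c]
    have h4 : k + (a-m-k) = a - m := by omega
    have h5 : k + (m-k) = m := by omega
    rw [h4, h5, ← fall_cast]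
    have h6 : c - ((k:ℂ) + ((a-m-k : ℕ):ℂ)) = c - (((a-m) : ℕ):ℂ) := by
      have h7 := congrArg (Nat.cast : ℕ → ℂ) h4
      push_cast at h7
      rw [← h7]
    rw [h6]
    ring
  rw [Finset.sum_congr rfl step1, ← Finset.mul_sum]
  have hsub : range (min m (a-m) + 1) ⊆ range (m+1) := Finset.range_subset_range.2 (by omega)
  have hext : (∑ k ∈ range (min m (a-m) + 1),
        ((m.choose k : ℂ) * fall (((a-m) : ℕ) : ℂ) k * fall (c - (((a-m) : ℕ) : ℂ)) (m-k)))
      = ∑ k ∈ range (m + 1),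
        ((m.choose k : ℂ) * fall (((a-m) : ℕ) : ℂ) k * fall (c - (((a-m) : ℕ) : ℂ)) (m-k)) := by
    apply Finset.sum_subset hsub
    intro k hk hk2
    have : a - m < k := by
      simp only [Finset.mem_range] at hk hk2; omega
    rw [fall_nat_zero_of_lt this]
    ring
  rw [hext]
  have hV : (∑ k ∈ range (m + 1),
        ((m.choose k : ℂ) * fall (((a-m) : ℕ) : ℂ) k * fall (c - (((a-m) : ℕ) : ℂ)) (m-k)))
      = fall c m := by
    rw [← fall_vandermonde]
    congr 1
    ring
  rw [hV]
  ring
lemma QtoG (a : ℕ) (c u v : ℂ) :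
    (∑ m ∈ range (a+1),
        fall c m / (m.factorial : ℂ) * (fall c (a-m) / ((a-m).factorial : ℂ)) * u^m * v^(a-m))
  = ∑ k ∈ range (a/2+1),
        fall c (a-k) / ((a-k).factorial : ℂ) * ((a-k).choose k : ℂ) * (u*v)^k * (u+v)^(a-2*k) := by
  symm
  have hrhs : ∀ k ∈ range (a/2+1),
      fall c (a-k) / ((a-k).factorial : ℂ) * ((a-k).choose k : ℂ) * (u*v)^k * (u+v)^(a-2*k)
      = ∑ m ∈ Ico k (a-k+1),
          fall c (a-k) / ((a-k).factorial : ℂ) * ((a-k).choose k : ℂ) * ((a-2*k).choose (m-k) : ℂ)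
            * u^m * v^(a-m) := by
    intro k hk
    have hk' : 2*k ≤ a := by
      simp only [Finset.mem_range, Nat.lt_succ_iff] at hk; omega
    rw [Finset.sum_Ico_eq_sum_range]
    have hn : a - k + 1 - k = a - 2*k + 1 := by omega
    rw [hn, add_pow, Finset.mul_sum]
    apply Finset.sum_congr rfl
    intro i hi
    have hi' : i ≤ a - 2*k := by simpa [Nat.lt_succ_iff] using hi
    have e1 : k + i - k = i := by omega
    have e2 : a - (k + i) = k + (a - 2*k - i) := by omega
    rw [e1, e2, pow_add u k i, pow_add v k (a - 2*k - i)]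
    ring
  rw [Finset.sum_congr rfl hrhs]
  rw [Finset.sum_comm'
    (t' := range (a+1)) (s' := fun m => range (min m (a-m) + 1))
    (by
      intro k m
      simp only [Finset.mem_range, Finset.mem_Ico, Nat.lt_succ_iff]
      omega)]
  apply Finset.sum_congr rfl
  intro m hm
  have hm' : m ≤ a := by simpa [Nat.lt_succ_iff] using hm
  have hfac : ∀ k ∈ range (min m (a-m) + 1),
      fall c (a-k) / ((a-k).factorial : ℂ) * ((a-k).choose k : ℂ) * ((a-2*k).choose (m-k) : ℂ)
        * u^m * v^(a-m)
      = (fall c (a-k) / ((a-k).factorial : ℂ) * ((a-k).choose k : ℂ) * ((a-2*k).choose (m-k) : ℂ))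
        * (u^m * v^(a-m)) := by
    intro k _; ring
  rw [Finset.sum_congr rfl hfac, ← Finset.sum_mul, key_m a m hm' c]
  ring
lemma fall_two_mul (x : ℂ) (j : ℕ) :
    fall x (2*j) = 4^j * fall (x/2) j * fall ((x-1)/2) j := by
  induction j with
  | zero => simp [fall]
  | succ j ih =>
    have h : 2*(j+1) = (2*j) + 1 + 1 := by omega
    rw [h, fall_succ, fall_succ, ih, fall_succ, fall_succ]
    push_cast
    ring
lemma fall_halves (N j : ℕ) :
    fall ((N:ℂ)/2) j * fall (((N:ℂ)-1)/2) j
      = fall (((N/2 : ℕ) : ℂ)) j * fall ((N:ℂ) - ((N/2 : ℕ) : ℂ) - 1/2) j := by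
  rcases Nat.even_or_odd N with ⟨n, hn⟩ | ⟨n, hn⟩
  · subst hn
    have h2 : (n + n) / 2 = n := by omega
    rw [h2]
    have e1 : ((n + n : ℕ) : ℂ)/2 = (n : ℂ) := by push_cast; ring
    have e2 : (((n + n : ℕ) : ℂ) - 1)/2 = ((n + n : ℕ) : ℂ) - (n : ℂ) - 1/2 := by push_cast; ring
    rw [e1, e2]
  · subst hn
    have h2 : (2*n + 1) / 2 = n := by omega
    rw [h2]
    have e1 : ((2*n + 1 : ℕ) : ℂ)/2 = ((2*n+1 : ℕ) : ℂ) - (n : ℂ) - 1/2 := by push_cast; ring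
    have e2 : (((2*n + 1 : ℕ) : ℂ) - 1)/2 = (n : ℂ) := by push_cast; ring
    rw [e1, e2, mul_comm]
lemma aux1 (PY A B C D E : ℂ) (hA : A ≠ 0) (hB : B ≠ 0) (hC : C ≠ 0) (hD : D ≠ 0) :
    PY / A * (A / (B * C)) * (B / D) * E = PY * (1/C) * (1/D) * E := by
  field_simp
lemma aux2 (PY e jf Cn F2 nf iF : ℂ) (he : e ≠ 0) (hjf : jf ≠ 0) (hnf : nf ≠ 0) (hif : iF ≠ 0) :
    PY * ((e * (jf * Cn * F2)) / nf) * (1/(iF * jf)) * e⁻¹ = PY / (nf * iF) * (Cn * F2) := by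
  field_simp
lemma diamond_perj (a i j : ℕ) (hij : i + j ≤ a/2) (lam : ℂ) :
    fall (lam + a - 1) (a - (i+j)) / (((a - (i+j)).factorial : ℂ))
      * (((a - (i+j)).choose (i+j)) : ℂ) * (((i+j).choose i) : ℂ) * (1/4 : ℂ)^j
    = poch (lam + ((a/2 : ℕ) : ℂ)) ((a+1)/2)
        / (((a - 2*i).factorial : ℂ) * ((i.factorial) : ℂ))
      * ((((a/2 - i).choose j : ℕ) : ℂ)
          * fall (((a - 2*i : ℕ) : ℂ) - ((a/2 - i : ℕ) : ℂ) - 1/2) j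
          * fall (lam + ((a/2 : ℕ) : ℂ) - 1) ((a/2 - i) - j)) := by
  have hcast : (((a+1)/2 : ℕ) : ℂ) + ((a/2 : ℕ) : ℂ) = (a : ℂ) := by
    have h : (a+1)/2 + a/2 = a := by omega
    exact_mod_cast congrArg (Nat.cast : ℕ → ℂ) h
  have h1 : a - (i+j) = (a+1)/2 + ((a/2 - i) - j) := by omega
  have hfallsplit : fall (lam + a - 1) (a - (i+j))
      = poch (lam + ((a/2 : ℕ) : ℂ)) ((a+1)/2)
        * fall (lam + ((a/2 : ℕ) : ℂ) - 1) ((a/2 - i) - j) := by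
    rw [h1, fall_add, poch_eq_fall]
    have e2 : lam + (a:ℂ) - 1 - (((a+1)/2 : ℕ) : ℂ) = lam + ((a/2 : ℕ):ℂ) - 1 := by
      rw [← hcast]; ring
    have e1 : lam + (a:ℂ) - 1 = lam + ((a/2 : ℕ):ℂ) + (((a+1)/2 : ℕ) : ℂ) - 1 := by
      rw [← hcast]; ring
    rw [e2, e1]
  rw [Nat.cast_choose ℂ (show i+j ≤ a - (i+j) by omega),
    Nat.cast_choose ℂ (show i ≤ i + j by omega)]
  have e1 : a - (i+j) - (i+j) = a - 2*i - 2*j := by omega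
  have e2 : i + j - i = j := by omega
  rw [e1, e2, hfallsplit]
  have h2jN : 2*j ≤ a - 2*i := by omega
  have hNN : (((a - 2*i - 2*j).factorial : ℕ) : ℂ) * fall (((a - 2*i : ℕ)) : ℂ) (2*j)
      = (((a-2*i).factorial : ℕ) : ℂ) := by
    rw [fall_cast]
    have hnat : (a - 2*i - 2*j).factorial * (a-2*i).descFactorial (2*j) = (a-2*i).factorial := by
      rw [Nat.descFactorial_eq_factorial_mul_choose]
      have h5 := Nat.choose_mul_factorial_mul_factorial h2jN
      calc (a - 2*i - 2*j).factorial * ((2*j).factorial * (a-2*i).choose (2*j))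
          = (a-2*i).choose (2*j) * (2*j).factorial * ((a - 2*i) - 2*j).factorial := by ring
        _ = (a-2*i).factorial := h5
    exact_mod_cast congrArg (Nat.cast : ℕ → ℂ) hnat
  have hsplit2 : fall (((a - 2*i : ℕ)) : ℂ) (2*j)
      = 4^j * (fall (((a/2 - i : ℕ)) : ℂ) j
          * fall (((a - 2*i : ℕ) : ℂ) - ((a/2 - i : ℕ) : ℂ) - 1/2) j) := by
    rw [fall_two_mul, mul_assoc, fall_halves]
    have h6 : (a - 2*i)/2 = a/2 - i := by omega
    rw [h6]
  have hfn : fall (((a/2 - i : ℕ)) : ℂ) j = (j.factorial : ℂ) * (((a/2-i).choose j : ℕ) : ℂ) := by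
    rw [fall_cast, Nat.descFactorial_eq_factorial_mul_choose]
    push_cast; ring
  have f1 : ((a - (i+j)).factorial : ℂ) ≠ 0 := Nat.cast_ne_zero.2 (Nat.factorial_ne_zero _)
  have f2 : ((i+j).factorial : ℂ) ≠ 0 := Nat.cast_ne_zero.2 (Nat.factorial_ne_zero _)
  have f3 : ((i).factorial : ℂ) ≠ 0 := Nat.cast_ne_zero.2 (Nat.factorial_ne_zero _)
  have f4 : ((j).factorial : ℂ) ≠ 0 := Nat.cast_ne_zero.2 (Nat.factorial_ne_zero _)
  have f5 : (((a-2*i)).factorial : ℂ) ≠ 0 := Nat.cast_ne_zero.2 (Nat.factorial_ne_zero _)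
  have f7 : (((a - 2*i - 2*j)).factorial : ℂ) ≠ 0 := Nat.cast_ne_zero.2 (Nat.factorial_ne_zero _)
  have f6 : (4 : ℂ)^j ≠ 0 := pow_ne_zero _ (by norm_num)
  have h14 : (1/4 : ℂ)^j = ((4:ℂ)^j)⁻¹ := by rw [one_div, inv_pow]
  rw [h14]
  rw [aux1 _ _ _ _ _ _ f1 f2 f7 (mul_ne_zero f3 f4)]
  have hKinv : (1 : ℂ)/((((a - 2*i - 2*j)).factorial : ℕ) : ℂ)
      = fall (((a - 2*i : ℕ)) : ℂ) (2*j) / (((a-2*i).factorial : ℕ) : ℂ) := by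
    rw [div_eq_div_iff f7 f5]
    linear_combination -hNN
  rw [hKinv, hsplit2, hfn]
  rw [aux2 _ _ _ _ _ _ _ f6 f4 f5 f3]
  ring
lemma diamond (a i : ℕ) (hi : i ≤ a/2) (lam : ℂ) :
    poch (lam - 1/2) ((a+1)/2) *
      (∑ k ∈ Ico i (a/2+1),
        fall (lam + a - 1) (a-k) / ((a-k).factorial : ℂ)
          * (((a-k).choose k) : ℂ) * ((k.choose i) : ℂ) * (1/4 : ℂ)^(k-i))
    = poch (lam + ((a/2 : ℕ) : ℂ)) ((a+1)/2)
        * poch (lam - 1/2) (a-i) / (((a - 2*i).factorial : ℂ) * ((i.factorial) : ℂ)) := by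
  have hcast : (((a+1)/2 : ℕ) : ℂ) + ((a/2 : ℕ) : ℂ) = (a : ℂ) := by
    have h : (a+1)/2 + a/2 = a := by omega
    exact_mod_cast congrArg (Nat.cast : ℕ → ℂ) h
  rw [Finset.sum_Ico_eq_sum_range]
  have hn : a/2 + 1 - i = (a/2 - i) + 1 := by omega
  rw [hn]
  have hper : ∀ j ∈ range ((a/2 - i) + 1),
      fall (lam + a - 1) (a-(i+j)) / ((a-(i+j)).factorial : ℂ)
        * (((a-(i+j)).choose (i+j)) : ℂ) * (((i+j).choose i) : ℂ) * (1/4 : ℂ)^(i+j-i)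
      = poch (lam + ((a/2 : ℕ) : ℂ)) ((a+1)/2)
          / (((a - 2*i).factorial : ℂ) * ((i.factorial) : ℂ))
        * ((((a/2 - i).choose j : ℕ) : ℂ)
            * fall (((a - 2*i : ℕ) : ℂ) - ((a/2 - i : ℕ) : ℂ) - 1/2) j
            * fall (lam + ((a/2 : ℕ) : ℂ) - 1) ((a/2 - i) - j)) := by
    intro j hj
    have hj' : j ≤ a/2 - i := by simpa [Nat.lt_succ_iff] using hj
    have e0 : i + j - i = j := by omega
    rw [e0]
    exact diamond_perj a i j (by omega) lam
  rw [Finset.sum_congr rfl hper, ← Finset.mul_sum, ← fall_vandermonde]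
  have harg : fall ((((a - 2*i : ℕ) : ℂ) - ((a/2 - i : ℕ) : ℂ) - 1/2) + (lam + ((a/2 : ℕ) : ℂ) - 1)) (a/2 - i)
      = poch ((lam - 1/2) + (((a+1)/2 : ℕ) : ℂ)) (a/2 - i) := by
    rw [poch_eq_fall]
    congr 1
    have c1 : ((a - 2*i : ℕ) : ℂ) = (a : ℂ) - 2*i := by
      push_cast [Nat.cast_sub (show 2*i ≤ a by omega)]; ring
    have c2 : ((a/2 - i : ℕ) : ℂ) = ((a/2 : ℕ) : ℂ) - i := by
      push_cast [Nat.cast_sub (show i ≤ a/2 by omega)]; ring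
    rw [c1, c2, ← hcast]
    push_cast
    ring
  rw [harg]
  have hpoch : poch (lam - 1/2) ((a+1)/2) * poch ((lam - 1/2) + (((a+1)/2 : ℕ) : ℂ)) (a/2 - i)
      = poch (lam - 1/2) (a - i) := by
    rw [← poch_add]
    congr 1
    omega
  calc poch (lam - 1/2) ((a+1)/2) *
        (poch (lam + ((a/2 : ℕ) : ℂ)) ((a+1)/2) / (((a - 2*i).factorial : ℂ) * ((i.factorial) : ℂ))
          * poch ((lam - 1/2) + (((a+1)/2 : ℕ) : ℂ)) (a/2 - i))
      = (poch (lam - 1/2) ((a+1)/2) * poch ((lam - 1/2) + (((a+1)/2 : ℕ) : ℂ)) (a/2 - i))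
          * poch (lam + ((a/2 : ℕ) : ℂ)) ((a+1)/2)
          / (((a - 2*i).factorial : ℂ) * ((i.factorial) : ℂ)) := by ring
    _ = poch (lam + ((a/2 : ℕ) : ℂ)) ((a+1)/2) * poch (lam - 1/2) (a-i)
          / (((a - 2*i).factorial : ℂ) * ((i.factorial) : ℂ)) := by rw [hpoch]; ring
lemma stepA (a : ℕ) (lam z : ℂ) (hz : z ≠ 1) :
    (1 - z) ^ a * jacobiP (lam - 1) (-2 * lam - 2 * a + 1) a ((3 + z) / (1 - z))
      = (-1 : ℂ)^a * ∑ m ∈ range (a + 1),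
          fall (lam + a - 1) m / (m.factorial : ℂ)
            * (fall (lam + a - 1) (a - m) / ((a - m).factorial : ℂ))
            * (1 + z)^m * (z - 1)^(a - m) := by
  have hz1 : (1 : ℂ) - z ≠ 0 := sub_ne_zero.2 (Ne.symm hz)
  rw [jacobiP, Finset.mul_sum, Finset.mul_sum]
  apply Finset.sum_congr rfl
  intro m hm
  have hma : m ≤ a := by simpa [Nat.lt_succ_iff] using hm
  have harg1 : lam - 1 + (m : ℂ) + 1 = lam + m := by ring
  have harg2 : lam - 1 + (-2 * lam - 2 * (a:ℂ) + 1) + (a:ℂ) + 1 = -(lam + (a:ℂ) - 1) := by ring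
  rw [harg1, harg2, poch_neg]
  have hp1 : poch (lam + (m:ℂ)) (a - m) = fall (lam + (a:ℂ) - 1) (a - m) := by
    rw [poch_eq_fall]
    congr 1
    have : ((a - m : ℕ) : ℂ) = (a : ℂ) - m := by
      push_cast [Nat.cast_sub hma]; ring
    rw [this]; ring
  rw [hp1]
  have ht : ((3 + z) / (1 - z) - 1) / 2 = (1 + z) / (1 - z) := by
    field_simp
    ring
  have hpow : (1 - z)^a = (1 - z)^m * (1 - z)^(a - m) := by
    rw [← pow_add]
    congr 1
    omega
  have hneg : (1 - z)^(a-m) = (-1 : ℂ)^(a-m) * (z - 1)^(a-m) := by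
    have h9 : (1:ℂ) - z = -1 * (z - 1) := by ring
    rw [h9, mul_pow]
  have hsgn : (-1 : ℂ)^m * (-1 : ℂ)^(a-m) = (-1 : ℂ)^a := by
    rw [← pow_add]
    congr 1
    omega
  have hne : (1 - z)^m ≠ 0 := pow_ne_zero _ hz1
  rw [ht, div_pow, hpow, hneg, ← hsgn]
  field_simp
lemma stepC (a : ℕ) (lam z : ℂ) :
    poch (lam - 1/2) ((a+1)/2) *
      (∑ k ∈ range (a/2+1),
        fall (lam + a - 1) (a-k) / ((a-k).factorial : ℂ) * (((a-k).choose k) : ℂ)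
          * (z^2 + (-1))^k * (2*z)^(a-2*k))
    = poch (lam + ((a/2 : ℕ) : ℂ)) ((a+1)/2) *
      ∑ i ∈ range (a/2+1),
        (-1:ℂ)^i * poch (lam - 1/2) (a-i) / (((a-2*i).factorial : ℂ) * ((i.factorial) : ℂ))
          * (2*z)^(a-2*i) := by
  have hper : ∀ k ∈ range (a/2+1),
      fall (lam + a - 1) (a-k) / ((a-k).factorial : ℂ) * (((a-k).choose k) : ℂ)
        * (z^2 + (-1))^k * (2*z)^(a-2*k)
      = ∑ i ∈ range (k+1), ((-1:ℂ)^i * (2*z)^(a-2*i))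
          * (fall (lam + a - 1) (a-k) / ((a-k).factorial : ℂ) * (((a-k).choose k) : ℂ)
              * ((k.choose i) : ℂ) * (1/4 : ℂ)^(k-i)) := by
    intro k hk
    have hk2 : 2*k ≤ a := by
      simp only [Finset.mem_range, Nat.lt_succ_iff] at hk; omega
    rw [add_pow, Finset.mul_sum, Finset.sum_mul]
    rw [← Finset.sum_range_reflect
      (fun i => ((-1:ℂ)^i * (2*z)^(a-2*i))
          * (fall (lam + a - 1) (a-k) / ((a-k).factorial : ℂ) * (((a-k).choose k) : ℂ)
              * ((k.choose i) : ℂ) * (1/4 : ℂ)^(k-i))) (k+1)]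
    apply Finset.sum_congr rfl
    intro j hj
    have hjk : j ≤ k := by simpa [Nat.lt_succ_iff] using hj
    have e0 : k + 1 - 1 - j = k - j := by omega
    rw [e0]
    have e1 : k - (k - j) = j := by omega
    have e2 : k.choose (k - j) = k.choose j := Nat.choose_symm hjk
    have e3 : a - 2*(k-j) = (a - 2*k) + 2*j := by omega
    rw [e1, e2, e3, pow_add]
    have hzz : (2*z)^(2*j) = 4^j * (z^2)^j := by
      rw [pow_mul, show (2*z)^2 = 4*z^2 by ring, mul_pow]
    rw [hzz]
    have h44 : ((1:ℂ)/4)^j * (4:ℂ)^j = 1 := by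
      rw [one_div, inv_pow, inv_mul_cancel₀ (pow_ne_zero _ (by norm_num : (4:ℂ) ≠ 0))]
    linear_combination (-(fall (lam + (a:ℂ) - 1) (a-k)) / (((a-k).factorial) : ℂ)
        * (((a-k).choose k) : ℂ) * ((k.choose j) : ℂ) * (-1:ℂ)^(k-j) * (2*z)^(a-2*k)
        * (z^2)^j) * h44
  rw [Finset.sum_congr rfl hper]
  rw [Finset.sum_comm'
    (t' := range (a/2+1)) (s' := fun i => Ico i (a/2+1))
    (by
      intro k i
      simp only [Finset.mem_range, Finset.mem_Ico, Nat.lt_succ_iff]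
      omega)]
  rw [Finset.mul_sum, Finset.mul_sum]
  apply Finset.sum_congr rfl
  intro i hi
  have hi' : i ≤ a/2 := by simpa [Nat.lt_succ_iff] using hi
  rw [← Finset.mul_sum]
  have hD := diamond a i hi' lam
  calc poch (lam - 1/2) ((a+1)/2) * (((-1:ℂ)^i * (2*z)^(a-2*i)) *
        ∑ k ∈ Ico i (a/2+1),
          fall (lam + a - 1) (a-k) / ((a-k).factorial : ℂ) * (((a-k).choose k) : ℂ)
            * ((k.choose i) : ℂ) * (1/4 : ℂ)^(k-i))
      = ((-1:ℂ)^i * (2*z)^(a-2*i)) * (poch (lam - 1/2) ((a+1)/2) *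
          ∑ k ∈ Ico i (a/2+1),
            fall (lam + a - 1) (a-k) / ((a-k).factorial : ℂ) * (((a-k).choose k) : ℂ)
              * ((k.choose i) : ℂ) * (1/4 : ℂ)^(k-i)) := by ring
    _ = ((-1:ℂ)^i * (2*z)^(a-2*i)) *
          (poch (lam + ((a/2 : ℕ) : ℂ)) ((a+1)/2)
            * poch (lam - 1/2) (a-i) / (((a - 2*i).factorial : ℂ) * ((i.factorial) : ℂ))) := by
        rw [hD]
    _ = poch (lam + ((a/2 : ℕ) : ℂ)) ((a+1)/2) *
          ((-1:ℂ)^i * poch (lam - 1/2) (a-i) / (((a-2*i).factorial : ℂ) * ((i.factorial) : ℂ))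
            * (2*z)^(a-2*i)) := by ring

/-- Scalar case (one-variable form): for `a ∈ ℕ`,
`(1−z)^a P^{λ−1, −2λ−2a+1}_a((3+z)/(1−z))
  = (−1)^a ((λ+[a/2])_{[(a+1)/2]}/(λ−1/2)_{[(a+1)/2]}) C^{λ−1/2}_a(z)`. -/
theorem jacobi_gegenbauer_identity_scalar (a : ℕ) (lam z : ℂ)
    (hden : poch (lam - 1 / 2) ((a + 1) / 2) ≠ 0)
    (hz : z ≠ 1) :
    (1 - z) ^ a * jacobiP (lam - 1) (-2 * lam - 2 * a + 1) a ((3 + z) / (1 - z))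
      = (-1 : ℂ) ^ a *
          (poch (lam + ((a / 2 : ℕ) : ℂ)) ((a + 1) / 2) / poch (lam - 1 / 2) ((a + 1) / 2)) *
          gegen (lam - 1 / 2) a z := by
  have h1 := stepA a lam z hz
  have h2 := QtoG a (lam + (a:ℂ) - 1) (1+z) (z-1)
  have hb1 : (1+z)*(z-1) = z^2 + (-1) := by ring
  have hb2 : (1+z)+(z-1) = 2*z := by ring
  rw [hb1, hb2] at h2
  have h4 := stepC a lam z
  rw [h1, h2]
  have hG : gegen (lam - 1/2) a z
      = ∑ i ∈ Finset.range (a/2+1),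
          (-1:ℂ)^i * poch (lam - 1/2) (a-i) / (((a-2*i).factorial : ℂ) * ((i.factorial) : ℂ))
            * (2*z)^(a-2*i) := rfl
  have hS : (∑ k ∈ Finset.range (a/2+1),
        fall (lam + a - 1) (a-k) / ((a-k).factorial : ℂ) * (((a-k).choose k) : ℂ)
          * (z^2 + (-1))^k * (2*z)^(a-2*k))
      = (poch (lam + ((a / 2 : ℕ) : ℂ)) ((a + 1) / 2) / poch (lam - 1 / 2) ((a + 1) / 2))
          * gegen (lam - 1/2) a z := by
    rw [hG, div_mul_eq_mul_div, eq_div_iff hden]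
    linear_combination h4
  rw [hS]
  ring
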